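/- Let d ≥ 1, λ ∈ ℝ and f ∈ L¹(ℝ^d). Define k(t,x) := −λ f(x) on ℝ₊×ℝ^d, let f^{*1} := f and f^{*(n+1)} := f * f^{*n} (convolution on ℝ^d), and set r(t,x) := λ ∑_{n=1}^∞ ((−λt)^{n−1}/(n−1)!) f^{*n}(x). Then: (a) for every T > 0 the series converges absolutely in L¹([0,T]×ℝ^d) (indeed ∑_{n≥1} (|λ|T)^{n}/(n−1)! ‖f‖_{L¹}^{n} < ∞ dominates it) and for almost every (t,x) ∈ ℝ₊×ℝ^d the series converges absolutely; (b) r is a density of the resolvent of the measure k(t,x) d(t,x), i.e. for almost every (t,x) ∈ ℝ₊×ℝ^d: r(t,x) + k(t,x) = ∫₀^t ∫_{ℝ^d} k(t−s, x−y) r(s,y) dy ds. -/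

import Mathlib

open MeasureTheory
open scoped ENNReal NNReal

/-- Spatial convolution powers: `convPow f n = f^{*(n+1)}`, i.e. `convPow f 0 = f` and
`convPow f (n+1) = f * convPow f n` (convolution on `ℝ^d`). -/
noncomputable def convPow {d : ℕ} (f : (Fin d → ℝ) → ℝ) : ℕ → (Fin d → ℝ) → ℝ
  | 0 => f
  | (n + 1) => fun x => ∫ y, f (x - y) * convPow f n y ∂volume

/-- The candidate resolvent density
`r(t,x) = λ ∑_{n=1}^∞ ((-λt)^{n-1}/(n-1)!) f^{*n}(x) = λ ∑_{m=0}^∞ ((-λt)^m/m!) f^{*(m+1)}(x)`. -/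
noncomputable def resolventSeries {d : ℕ} (lam : ℝ) (f : (Fin d → ℝ) → ℝ)
    (q : ℝ × (Fin d → ℝ)) : ℝ :=
  lam * ∑' m : ℕ, ((-(lam * q.1)) ^ m / (Nat.factorial m : ℝ)) * convPow f m q.2

namespace Stmt18Aux

variable {d : ℕ} {f : (Fin d → ℝ) → ℝ}
lemma convPow_measurable (hf : Measurable f) : ∀ m, Measurable (convPow f m)
  | 0 => hf
  | (m + 1) => by
    have h : StronglyMeasurable (fun p : (Fin d → ℝ) × (Fin d → ℝ) =>
        f (p.1 - p.2) * convPow f m p.2) :=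
      ((hf.comp (measurable_fst.sub measurable_snd)).mul
        ((convPow_measurable hf m).comp measurable_snd)).stronglyMeasurable
    exact h.integral_prod_right'.measurable

lemma lintegral_conv (hf : Measurable f) {g : (Fin d → ℝ) → ℝ} (hg : Measurable g) :
    ∫⁻ x, (∫⁻ y, (‖f (x - y)‖₊ : ℝ≥0∞) * (‖g y‖₊ : ℝ≥0∞) ∂volume) ∂volume
      = (∫⁻ x, (‖f x‖₊ : ℝ≥0∞) ∂volume) * ∫⁻ y, (‖g y‖₊ : ℝ≥0∞) ∂volume := by
  rw [lintegral_lintegral_swap]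
  · have : ∀ y : Fin d → ℝ, (∫⁻ x, (‖f (x - y)‖₊ : ℝ≥0∞) * (‖g y‖₊ : ℝ≥0∞) ∂volume)
        = (∫⁻ x, (‖f x‖₊ : ℝ≥0∞) ∂volume) * (‖g y‖₊ : ℝ≥0∞) := by
      intro y
      rw [lintegral_mul_const' _ _ ENNReal.coe_ne_top,
        lintegral_sub_right_eq_self (fun x => (‖f x‖₊ : ℝ≥0∞)) y]
    simp_rw [this]
    rw [lintegral_const_mul _ hg.nnnorm.coe_nnreal_ennreal]
  · exact ((hf.comp (measurable_fst.sub measurable_snd)).nnnorm.coe_nnreal_ennreal.mul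
      (hg.comp measurable_snd).nnnorm.coe_nnreal_ennreal).aemeasurable

lemma conv_ennnorm_le (hf : Measurable f) {g : (Fin d → ℝ) → ℝ} (x : Fin d → ℝ) :
    (‖∫ y, f (x - y) * g y ∂volume‖₊ : ℝ≥0∞)
      ≤ ∫⁻ y, (‖f (x - y)‖₊ : ℝ≥0∞) * (‖g y‖₊ : ℝ≥0∞) ∂volume := by
  refine (enorm_integral_le_lintegral_enorm _).trans (le_of_eq ?_)
  simp [enorm_mul]
  rfl

lemma convPow_lintegral_le (hf : Measurable f) :
    ∀ m, (∫⁻ x, (‖convPow f m x‖₊ : ℝ≥0∞) ∂volume)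
      ≤ (∫⁻ x, (‖f x‖₊ : ℝ≥0∞) ∂volume) ^ (m + 1)
  | 0 => le_of_eq (pow_one _).symm
  | (m + 1) => by
    calc (∫⁻ x, (‖convPow f (m+1) x‖₊ : ℝ≥0∞) ∂volume)
        ≤ ∫⁻ x, ∫⁻ y, (‖f (x - y)‖₊ : ℝ≥0∞) * (‖convPow f m y‖₊ : ℝ≥0∞) ∂volume ∂volume :=
          lintegral_mono fun x => conv_ennnorm_le hf x
      _ = (∫⁻ x, (‖f x‖₊ : ℝ≥0∞) ∂volume) * ∫⁻ y, (‖convPow f m y‖₊ : ℝ≥0∞) ∂volume :=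
          lintegral_conv hf (convPow_measurable hf m)
      _ ≤ (∫⁻ x, (‖f x‖₊ : ℝ≥0∞) ∂volume) * (∫⁻ x, (‖f x‖₊ : ℝ≥0∞) ∂volume) ^ (m + 1) :=
          mul_le_mul_right (convPow_lintegral_le hf m) _
      _ = (∫⁻ x, (‖f x‖₊ : ℝ≥0∞) ∂volume) ^ (m + 1 + 1) := by ring

/-- `G' f m x = ∫⁻ y, ‖f (x - y)‖₊ * ‖convPow f m y‖₊`. -/
noncomputable def G' (f : (Fin d → ℝ) → ℝ) (m : ℕ) (x : Fin d → ℝ) : ℝ≥0∞ :=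
  ∫⁻ y, (‖f (x - y)‖₊ : ℝ≥0∞) * (‖convPow f m y‖₊ : ℝ≥0∞) ∂volume

lemma measurable_G' (hf : Measurable f) (m : ℕ) : Measurable (G' f m) :=
  Measurable.lintegral_prod_right'
    ((hf.comp (measurable_fst.sub measurable_snd)).nnnorm.coe_nnreal_ennreal.mul
      ((convPow_measurable hf m).comp measurable_snd).nnnorm.coe_nnreal_ennreal)

lemma convPow_ennnorm_le_G' (hf : Measurable f) (m : ℕ) (x : Fin d → ℝ) :
    (‖convPow f (m + 1) x‖₊ : ℝ≥0∞) ≤ G' f m x :=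
  conv_ennnorm_le hf x

lemma ae_good (hfm : Measurable f) (hf : Integrable f volume) :
    ∀ᵐ x ∂(volume : Measure (Fin d → ℝ)), ∀ n : ℕ,
      (∑' m : ℕ, ENNReal.ofReal ((n : ℝ) ^ m / (Nat.factorial m : ℝ)) *
        ((‖convPow f m x‖₊ : ℝ≥0∞) + G' f m x)) ≠ ⊤ := by
  rw [ae_all_iff]
  intro n
  set A : ℝ≥0∞ := ∫⁻ x, (‖f x‖₊ : ℝ≥0∞) ∂volume with hA
  have hAne : A ≠ ⊤ := ne_of_lt hf.2
  set a : ℝ := A.toReal with ha'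
  have ha : 0 ≤ a := ENNReal.toReal_nonneg
  have hAa : A = ENNReal.ofReal a := (ENNReal.ofReal_toReal hAne).symm
  have hmeas : ∀ m : ℕ, Measurable fun x : Fin d → ℝ =>
      ENNReal.ofReal ((n : ℝ) ^ m / (Nat.factorial m : ℝ)) *
        ((‖convPow f m x‖₊ : ℝ≥0∞) + G' f m x) :=
    fun m => measurable_const.mul
      (((convPow_measurable hfm m).nnnorm.coe_nnreal_ennreal).add (measurable_G' hfm m))
  have key : (∫⁻ x, ∑' m : ℕ, ENNReal.ofReal ((n : ℝ) ^ m / (Nat.factorial m : ℝ)) *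
      ((‖convPow f m x‖₊ : ℝ≥0∞) + G' f m x) ∂volume) ≠ ⊤ := by
    rw [lintegral_tsum (fun m => (hmeas m).aemeasurable)]
    have hle : ∀ m : ℕ, (∫⁻ x, ENNReal.ofReal ((n : ℝ) ^ m / (Nat.factorial m : ℝ)) *
        ((‖convPow f m x‖₊ : ℝ≥0∞) + G' f m x) ∂volume)
        ≤ ENNReal.ofReal ((a + a ^ 2) * (((n : ℝ) * a) ^ m / (Nat.factorial m : ℝ))) := by
      intro m
      rw [lintegral_const_mul _ (f := fun x => (‖convPow f m x‖₊ : ℝ≥0∞) + G' f m x) (((convPow_measurable hfm m).nnnorm.coe_nnreal_ennreal).add (measurable_G' hfm m)),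
        lintegral_add_left (convPow_measurable hfm m).nnnorm.coe_nnreal_ennreal]
      have hG : (∫⁻ x, G' f m x ∂volume) ≤ A ^ (m + 2) := by
        have : (∫⁻ x, G' f m x ∂volume) = A * ∫⁻ y, (‖convPow f m y‖₊ : ℝ≥0∞) ∂volume :=
          lintegral_conv hfm (convPow_measurable hfm m)
        rw [this]
        calc A * ∫⁻ y, (‖convPow f m y‖₊ : ℝ≥0∞) ∂volume
            ≤ A * A ^ (m + 1) := mul_le_mul_right (convPow_lintegral_le hfm m) _
          _ = A ^ (m + 2) := by ring
      calc ENNReal.ofReal ((n : ℝ) ^ m / (Nat.factorial m : ℝ)) *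
            ((∫⁻ x, (‖convPow f m x‖₊ : ℝ≥0∞) ∂volume) + ∫⁻ x, G' f m x ∂volume)
          ≤ ENNReal.ofReal ((n : ℝ) ^ m / (Nat.factorial m : ℝ)) *
            (A ^ (m + 1) + A ^ (m + 2)) :=
            mul_le_mul_right (add_le_add (convPow_lintegral_le hfm m) hG) _
        _ = ENNReal.ofReal (((n : ℝ) ^ m / (Nat.factorial m : ℝ)) *
              (a ^ (m + 1) + a ^ (m + 2))) := by
            rw [hAa, ← ENNReal.ofReal_pow ha, ← ENNReal.ofReal_pow ha, ← ENNReal.ofReal_add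
              (pow_nonneg ha _) (pow_nonneg ha _), ← ENNReal.ofReal_mul
              (div_nonneg (pow_nonneg (Nat.cast_nonneg n) m) (Nat.cast_nonneg _))]
        _ = ENNReal.ofReal ((a + a ^ 2) * (((n : ℝ) * a) ^ m / (Nat.factorial m : ℝ))) := by
            congr 1
            rw [mul_pow]
            ring
    refine ne_top_of_le_ne_top ?_ (ENNReal.tsum_le_tsum hle)
    rw [← ENNReal.ofReal_tsum_of_nonneg (fun m => mul_nonneg (by positivity)
      (div_nonneg (pow_nonneg (by positivity) m) (Nat.cast_nonneg _)))
      ((Real.summable_pow_div_factorial ((n : ℝ) * a)).mul_left _)]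
    exact ENNReal.ofReal_ne_top
  filter_upwards [ae_lt_top (Measurable.ennreal_tsum hmeas) key] with x hx
  exact hx.ne

lemma pointwise (hfm : Measurable f) {lam t : ℝ} {x : Fin d → ℝ} (ht : 0 ≤ t)
    (hx : ∀ n : ℕ, (∑' m : ℕ, ENNReal.ofReal ((n : ℝ) ^ m / (Nat.factorial m : ℝ)) *
        ((‖convPow f m x‖₊ : ℝ≥0∞) + G' f m x)) ≠ ⊤) :
    Summable (fun m : ℕ =>
      |lam * ((-(lam * t)) ^ m / (Nat.factorial m : ℝ)) * convPow f m x|) ∧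
    resolventSeries lam f (t, x) + (-lam * f x) =
      ∫ s in (0:ℝ)..t, ∫ y, (-lam * f (x - y)) * resolventSeries lam f (s, y) ∂volume := by
  obtain ⟨n, hn⟩ := exists_nat_ge (|lam| * t)
  set c : ℕ → ℝ := fun m => (n : ℝ) ^ m / (Nat.factorial m : ℝ) with hc
  have hc0 : ∀ m, 0 ≤ c m := fun m =>
    div_nonneg (pow_nonneg (Nat.cast_nonneg n) m) (Nat.cast_nonneg _)
  have h1 : (∑' m : ℕ, ENNReal.ofReal (c m) * (‖convPow f m x‖₊ : ℝ≥0∞)) ≠ ⊤ :=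
    ne_top_of_le_ne_top (hx n)
      (ENNReal.tsum_le_tsum fun m => mul_le_mul_right le_self_add _)
  have h2 : (∑' m : ℕ, ENNReal.ofReal (c m) * G' f m x) ≠ ⊤ :=
    ne_top_of_le_ne_top (hx n)
      (ENNReal.tsum_le_tsum fun m => mul_le_mul_right le_add_self _)
  have h2' : (∑' m : ℕ, ENNReal.ofReal (c m) * (‖convPow f (m + 1) x‖₊ : ℝ≥0∞)) ≠ ⊤ :=
    ne_top_of_le_ne_top h2
      (ENNReal.tsum_le_tsum fun m => mul_le_mul_right (convPow_ennnorm_le_G' hfm m x) _)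
  have toRealaux : ∀ (u : ℝ) (_ : 0 ≤ u) (v : ℝ),
      (ENNReal.ofReal u * (‖v‖₊ : ℝ≥0∞)).toReal = u * |v| := by
    intro u hu v
    rw [ENNReal.toReal_mul, ENNReal.toReal_ofReal hu, ENNReal.coe_toReal, coe_nnnorm,
      Real.norm_eq_abs]
  have S1 : Summable fun m => c m * |convPow f m x| := by
    have := ENNReal.summable_toReal h1
    simpa only [toRealaux _ (hc0 _)] using this
  have S2 : Summable fun m => c m * |convPow f (m + 1) x| := by
    have := ENNReal.summable_toReal h2'
    simpa only [toRealaux _ (hc0 _)] using this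
  have hcb : ∀ s : ℝ, |s| ≤ t → ∀ m : ℕ,
      |(-(lam * s)) ^ m / (Nat.factorial m : ℝ)| ≤ c m := by
    intro s hs m
    rw [abs_div, abs_pow, abs_neg, abs_mul, Nat.abs_cast, hc]
    have hfac : (0:ℝ) < (Nat.factorial m : ℝ) := by exact_mod_cast Nat.factorial_pos m
    refine (div_le_div_iff_of_pos_right hfac).mpr (pow_le_pow_left₀ (by positivity) ?_ m)
    calc |lam| * |s| ≤ |lam| * t := mul_le_mul_of_nonneg_left hs (abs_nonneg _)
      _ ≤ n := hn
  have habs : |t| ≤ t := by rw [abs_of_nonneg ht]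
  constructor
  · refine Summable.of_nonneg_of_le (fun m => abs_nonneg _) (fun m => ?_) (S1.mul_left |lam|)
    rw [abs_mul, abs_mul, mul_assoc]
    exact mul_le_mul_of_nonneg_left
      (mul_le_mul_of_nonneg_right (hcb t habs m) (abs_nonneg _)) (abs_nonneg lam)
  · have Sum0 : Summable fun m : ℕ =>
        ((-(lam * t)) ^ m / (Nat.factorial m : ℝ)) * convPow f m x := by
      refine Summable.of_norm_bounded S1 fun m => ?_
      rw [Real.norm_eq_abs, abs_mul]
      exact mul_le_mul_of_nonneg_right (hcb t habs m) (abs_nonneg _)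
    have hinner : ∀ s ∈ Set.Ioc (0:ℝ) t,
        (∫ y, (-lam * f (x - y)) * resolventSeries lam f (s, y) ∂volume)
          = (-lam * lam) * ∑' m : ℕ,
              ((-(lam * s)) ^ m / (Nat.factorial m : ℝ)) * convPow f (m+1) x := by
      intro s hs
      have hsb : |s| ≤ t := by rw [abs_of_pos hs.1]; exact hs.2
      have hrw : ∀ y, (-lam * f (x - y)) * resolventSeries lam f (s, y)
          = (-lam * lam) * ∑' m : ℕ,
              f (x - y) * (((-(lam * s)) ^ m / (Nat.factorial m : ℝ)) * convPow f m y) := by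
        intro y
        simp only [resolventSeries]
        rw [tsum_mul_left]
        ring
      simp only [hrw]
      rw [integral_const_mul]
      rw [integral_tsum (f := fun (m : ℕ) (y : Fin d → ℝ) =>
            f (x - y) * ((-(lam * s)) ^ m / (Nat.factorial m : ℝ) * convPow f m y))
          (fun m => ((hfm.comp (measurable_const.sub measurable_id)).mul
          ((convPow_measurable hfm m).const_mul _)).aestronglyMeasurable) ?_]
      · refine congrArg _ (tsum_congr fun m => ?_)
        simp_rw [mul_left_comm]
        rw [integral_const_mul]
        rfl
      · refine ne_top_of_le_ne_top h2 (ENNReal.tsum_le_tsum fun m => ?_)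
        have hpt : ∀ y, ((‖f (x - y) * (((-(lam * s)) ^ m / (Nat.factorial m : ℝ)) *
              convPow f m y)‖₊ : ℝ≥0∞))
            = (‖((-(lam * s)) ^ m / (Nat.factorial m : ℝ))‖₊ : ℝ≥0∞) *
              ((‖f (x - y)‖₊ : ℝ≥0∞) * (‖convPow f m y‖₊ : ℝ≥0∞)) := by
          intro y
          rw [nnnorm_mul, nnnorm_mul, ENNReal.coe_mul, ENNReal.coe_mul]
          ring
        simp_rw [enorm_eq_nnnorm, hpt]
        rw [lintegral_const_mul' _ _ ENNReal.coe_ne_top]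
        refine mul_le_mul_left ?_ _
        rw [← enorm_eq_nnnorm, ← ofReal_norm, Real.norm_eq_abs]
        exact ENNReal.ofReal_le_ofReal (hcb s hsb m)
    rw [intervalIntegral.integral_of_le ht, setIntegral_congr_fun measurableSet_Ioc hinner,
      integral_const_mul]
    rw [integral_tsum (f := fun (m : ℕ) (s : ℝ) =>
          (-(lam * s)) ^ m / (Nat.factorial m : ℝ) * convPow f (m+1) x)
        (fun m => Continuous.aestronglyMeasurable (by fun_prop)) ?_]
    · have hval : ∀ m : ℕ, (∫ s in Set.Ioc (0:ℝ) t,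
          ((-(lam * s)) ^ m / (Nat.factorial m : ℝ)) * convPow f (m+1) x ∂volume)
          = ((-lam) ^ m * (t ^ (m+1) / (((m:ℝ)+1) * (Nat.factorial m : ℝ)))) *
              convPow f (m+1) x := by
        intro m
        rw [integral_mul_const]
        congr 1
        have hpt : ∀ s : ℝ, ((-(lam * s)) ^ m / (Nat.factorial m : ℝ))
            = ((-lam) ^ m / (Nat.factorial m : ℝ)) * s ^ m := by
          intro s
          rw [neg_mul_eq_neg_mul, mul_pow]
          ring
        rw [← intervalIntegral.integral_of_le ht]
        simp_rw [hpt]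
        rw [intervalIntegral.integral_const_mul, integral_pow]
        rw [zero_pow (Nat.succ_ne_zero m)]
        have hf1 : (Nat.factorial m : ℝ) ≠ 0 := by exact_mod_cast Nat.factorial_ne_zero m
        have hf2 : ((m:ℝ)+1) ≠ 0 := by positivity
        push_cast
        field_simp
        ring
      rw [tsum_congr hval]
      simp only [resolventSeries]
      rw [Summable.tsum_eq_zero_add Sum0]
      have hz : ((-(lam * t)) ^ 0 / ((Nat.factorial 0 : ℕ) : ℝ)) * convPow f 0 x = f x := by
        simp [convPow]
      rw [hz]
      have hL : lam * (f x + ∑' m : ℕ,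
          ((-(lam * t)) ^ (m+1) / (Nat.factorial (m+1) : ℝ)) * convPow f (m+1) x)
          + (-lam * f x)
          = ∑' m : ℕ, lam *
            (((-(lam * t)) ^ (m+1) / (Nat.factorial (m+1) : ℝ)) * convPow f (m+1) x) := by
        rw [tsum_mul_left]
        ring
      rw [hL, ← tsum_mul_left]
      refine tsum_congr fun m => ?_
      have hfac : ((Nat.factorial (m+1) : ℕ) : ℝ) = ((m:ℝ)+1) * (Nat.factorial m : ℝ) := by
        push_cast [Nat.factorial_succ]
        ring
      have hpow : (-(lam * t)) ^ (m+1) = ((-lam) ^ m * (-lam)) * t ^ (m+1) := by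
        rw [neg_mul_eq_neg_mul, mul_pow, pow_succ]
      rw [hfac, hpow]
      have hf1 : (Nat.factorial m : ℝ) ≠ 0 := by exact_mod_cast Nat.factorial_ne_zero m
      have hf2 : ((m:ℝ)+1) ≠ 0 := by positivity
      field_simp
    · have hbound : (∑' m : ℕ, ∫⁻ s in Set.Ioc (0:ℝ) t,
            ‖((-(lam * s)) ^ m / (Nat.factorial m : ℝ)) * convPow f (m+1) x‖₊ ∂volume)
          ≤ (∑' m : ℕ, ENNReal.ofReal (c m) * (‖convPow f (m + 1) x‖₊ : ℝ≥0∞)) *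
            ENNReal.ofReal t := by
        rw [← ENNReal.tsum_mul_right]
        refine ENNReal.tsum_le_tsum fun m => ?_
        calc (∫⁻ s in Set.Ioc (0:ℝ) t,
              ‖((-(lam * s)) ^ m / (Nat.factorial m : ℝ)) * convPow f (m+1) x‖₊ ∂volume)
            ≤ ∫⁻ _ in Set.Ioc (0:ℝ) t,
              ENNReal.ofReal (c m) * (‖convPow f (m+1) x‖₊ : ℝ≥0∞) ∂volume := by
              refine setLIntegral_mono' measurableSet_Ioc fun s hs => ?_
              rw [nnnorm_mul, ENNReal.coe_mul]
              refine mul_le_mul_left ?_ _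
              rw [← enorm_eq_nnnorm, ← ofReal_norm, Real.norm_eq_abs]
              exact ENNReal.ofReal_le_ofReal
                (hcb s (by rw [abs_of_pos hs.1]; exact hs.2) m)
          _ = (ENNReal.ofReal (c m) * (‖convPow f (m+1) x‖₊ : ℝ≥0∞)) * volume (Set.Ioc (0:ℝ) t) :=
              setLIntegral_const _ _
          _ ≤ ENNReal.ofReal (c m) * (‖convPow f (m+1) x‖₊ : ℝ≥0∞) * ENNReal.ofReal t := by
              rw [Real.volume_Ioc, sub_zero]
      exact ne_top_of_le_ne_top (ENNReal.mul_ne_top h2' ENNReal.ofReal_ne_top) hbound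
lemma summable_L1 (hfm : Measurable f) (hf : Integrable f volume) (lam : ℝ) {T : ℝ}
    (hT : 0 ≤ T) :
    Summable (fun m : ℕ => ∫ q in Set.Icc (0:ℝ) T ×ˢ (Set.univ : Set (Fin d → ℝ)),
      |lam * ((-(lam * q.1)) ^ m / (Nat.factorial m : ℝ)) * convPow f m q.2| ∂volume) := by
  set A : ℝ≥0∞ := ∫⁻ x, (‖f x‖₊ : ℝ≥0∞) ∂volume with hA
  have hAne : A ≠ ⊤ := ne_of_lt hf.2
  set a : ℝ := A.toReal with ha'
  have ha : 0 ≤ a := ENNReal.toReal_nonneg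
  have hAa : A = ENNReal.ofReal a := (ENNReal.ofReal_toReal hAne).symm
  refine Summable.of_nonneg_of_le (fun m => integral_nonneg fun q => abs_nonneg _)
    (fun m => ?_)
    ((Real.summable_pow_div_factorial (|lam| * T * a)).mul_left (|lam| * T * a))
  have hmeasq : Measurable (fun q : ℝ × (Fin d → ℝ) =>
      lam * ((-(lam * q.1)) ^ m / (Nat.factorial m : ℝ)) * convPow f m q.2) :=
    ((((measurable_fst.const_mul lam).neg.pow_const m).div_const _).const_mul lam).mul
      ((convPow_measurable hfm m).comp measurable_snd)
  rw [integral_eq_lintegral_of_nonneg_ae (Filter.Eventually.of_forall fun q => abs_nonneg _)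
    hmeasq.abs.aestronglyMeasurable]
  refine ENNReal.toReal_le_of_le_ofReal (by positivity) ?_
  have hfacpos : (0:ℝ) < (Nat.factorial m : ℝ) := by exact_mod_cast Nat.factorial_pos m
  set K : ℝ := |lam| * ((|lam| * T) ^ m / (Nat.factorial m : ℝ)) with hK
  have hK0 : 0 ≤ K := by positivity
  calc (∫⁻ q in Set.Icc (0:ℝ) T ×ˢ (Set.univ : Set (Fin d → ℝ)),
        ENNReal.ofReal |lam * ((-(lam * q.1)) ^ m / (Nat.factorial m : ℝ)) * convPow f m q.2|
          ∂volume)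
      ≤ ∫⁻ q in Set.Icc (0:ℝ) T ×ˢ (Set.univ : Set (Fin d → ℝ)),
        ENNReal.ofReal K * ENNReal.ofReal |convPow f m q.2| ∂volume := by
        refine setLIntegral_mono' (measurableSet_Icc.prod MeasurableSet.univ) fun q hq => ?_
        rw [← ENNReal.ofReal_mul hK0]
        refine ENNReal.ofReal_le_ofReal ?_
        rw [abs_mul, abs_mul, abs_div, abs_pow, abs_neg, abs_mul, Nat.abs_cast, hK]
        refine mul_le_mul_of_nonneg_right (mul_le_mul_of_nonneg_left ?_ (abs_nonneg lam))
          (abs_nonneg _)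
        refine (div_le_div_iff_of_pos_right hfacpos).mpr (pow_le_pow_left₀ (by positivity) ?_ m)
        exact mul_le_mul_of_nonneg_left
          (by rw [abs_of_nonneg hq.1.1]; exact hq.1.2) (abs_nonneg lam)
    _ = ENNReal.ofReal K * ∫⁻ q in Set.Icc (0:ℝ) T ×ˢ (Set.univ : Set (Fin d → ℝ)),
        ENNReal.ofReal |convPow f m q.2| ∂volume :=
        lintegral_const_mul' _ _ ENNReal.ofReal_ne_top
    _ ≤ ENNReal.ofReal K * (ENNReal.ofReal (a ^ (m + 1)) * ENNReal.ofReal T) := by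
        refine mul_le_mul_right ?_ _
        have hrs : (volume : Measure (ℝ × (Fin d → ℝ))).restrict
            (Set.Icc (0:ℝ) T ×ˢ (Set.univ : Set (Fin d → ℝ)))
            = (volume.restrict (Set.Icc (0:ℝ) T)).prod (volume : Measure (Fin d → ℝ)) := by
          rw [Measure.volume_eq_prod, ← Measure.prod_restrict, Measure.restrict_univ]
        rw [hrs]
        rw [lintegral_prod (f := fun z : ℝ × (Fin d → ℝ) => ENNReal.ofReal |convPow f m z.2|)
          (((convPow_measurable hfm m).comp
            measurable_snd).abs.ennreal_ofReal.aemeasurable)]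
        have hinner : ∀ t : ℝ, (∫⁻ x, ENNReal.ofReal |convPow f m x| ∂volume)
            ≤ ENNReal.ofReal (a ^ (m + 1)) := by
          intro t
          have : (∫⁻ x, ENNReal.ofReal |convPow f m x| ∂volume)
              = ∫⁻ x, (‖convPow f m x‖₊ : ℝ≥0∞) ∂volume := by
            simp_rw [← Real.norm_eq_abs, ofReal_norm, enorm_eq_nnnorm]
          rw [this, ENNReal.ofReal_pow ha]
          rw [← hAa]
          exact convPow_lintegral_le hfm m
        calc (∫⁻ t in Set.Icc (0:ℝ) T, ∫⁻ x, ENNReal.ofReal |convPow f m x| ∂volume ∂volume)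
            ≤ ∫⁻ _ in Set.Icc (0:ℝ) T, ENNReal.ofReal (a ^ (m + 1)) ∂volume :=
              setLIntegral_mono' measurableSet_Icc fun t _ => hinner t
          _ = ENNReal.ofReal (a ^ (m + 1)) * volume (Set.Icc (0:ℝ) T) :=
              setLIntegral_const _ _
          _ = ENNReal.ofReal (a ^ (m + 1)) * ENNReal.ofReal T := by
              rw [Real.volume_Icc, sub_zero]
    _ ≤ ENNReal.ofReal (|lam| * T * a * ((|lam| * T * a) ^ m / (Nat.factorial m : ℝ))) := by
        rw [← ENNReal.ofReal_mul (by positivity), ← ENNReal.ofReal_mul (by positivity)]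
        refine ENNReal.ofReal_le_ofReal (le_of_eq ?_)
        rw [hK, mul_pow, mul_pow]
        ring
end Stmt18Aux

/-- for `f ∈ L¹(ℝ^d)` and `k(t,x) = -λ f(x)`:
(a) the series for `r` converges absolutely in `L¹([0,T]×ℝ^d)` for every `T > 0` and
converges absolutely at almost every point of `ℝ₊×ℝ^d`;
(b) `r` is a resolvent density of `k`, i.e. `r + k = k*r` a.e. on `ℝ₊×ℝ^d`. -/
theorem stmt18 (d : ℕ) (hd : 1 ≤ d) (lam : ℝ)
    (f : (Fin d → ℝ) → ℝ) (hfmeas : Measurable f) (hf : Integrable f volume) :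
    (∀ T : ℝ, 0 < T →
      Summable (fun m : ℕ =>
        ∫ q in Set.Icc (0 : ℝ) T ×ˢ (Set.univ : Set (Fin d → ℝ)),
          |lam * ((-(lam * q.1)) ^ m / (Nat.factorial m : ℝ)) * convPow f m q.2| ∂volume)) ∧
    (∀ᵐ q ∂(volume.restrict (Set.Ici (0 : ℝ) ×ˢ (Set.univ : Set (Fin d → ℝ)))),
      Summable (fun m : ℕ =>
        |lam * ((-(lam * q.1)) ^ m / (Nat.factorial m : ℝ)) * convPow f m q.2|)) ∧
    (∀ᵐ q ∂(volume.restrict (Set.Ici (0 : ℝ) ×ˢ (Set.univ : Set (Fin d → ℝ)))),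
      resolventSeries lam f q + (-lam * f q.2) =
        ∫ s in (0 : ℝ)..q.1,
          ∫ y, (-lam * f (q.2 - y)) * resolventSeries lam f (s, y) ∂volume) := by
  have hgood := Stmt18Aux.ae_good hfmeas hf
  have hprod : ∀ᵐ q ∂(volume : Measure (ℝ × (Fin d → ℝ))), ∀ n : ℕ,
      (∑' m : ℕ, ENNReal.ofReal ((n : ℝ) ^ m / (Nat.factorial m : ℝ)) *
        ((‖convPow f m q.2‖₊ : ℝ≥0∞) + Stmt18Aux.G' f m q.2)) ≠ ⊤ := by
    rw [Measure.volume_eq_prod]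
    exact Measure.quasiMeasurePreserving_snd.ae hgood
  refine ⟨fun T hT => Stmt18Aux.summable_L1 hfmeas hf lam hT.le, ?_, ?_⟩
  · rw [ae_restrict_iff' (measurableSet_Ici.prod MeasurableSet.univ)]
    filter_upwards [hprod] with q hq hmem
    exact (Stmt18Aux.pointwise hfmeas hmem.1 hq).1
  · rw [ae_restrict_iff' (measurableSet_Ici.prod MeasurableSet.univ)]
    filter_upwards [hprod] with q hq hmem
    obtain ⟨t, x⟩ := q
    exact (Stmt18Aux.pointwise hfmeas hmem.1 hq).2
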